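/- Assume ∫_τ^∞ p(u) du < ∞ and that ∫_ε^∞ du/φ(u) < ∞ for some ε > 0. Let x be a solution of (E) with x(t) > 0 and x′(t) ≥ 0 for all t ≥ τ. Then Σ_{j=0}^∞ ∫_{t_j}^{ζ_j} (1/r(s))·(∫_{t_{j+1}}^∞ p(u) du) ds ≤ ∫_{x(t_0)}^∞ dz/φ(z) < ∞; in particular the series on the left converges. -/

import Mathlib

open MeasureTheory Set Filter

theorem stmt15
    (t ζ : ℕ → ℝ) (ht_mono : StrictMono t)
    (ht_top : Tendsto t atTop atTop)
    (hζ : ∀ k : ℕ, ζ k ∈ Icc (t k) (t (k+1)))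
    (r : ℝ → ℝ) (hr_cont : ContinuousOn r (Ici (t 0)))
    (hr_pos : ∀ s ∈ Ici (t 0), 0 < r s)
    (f : ℝ → ℝ → ℝ)
    (hf_cont : ContinuousOn (fun q : ℝ × ℝ => f q.1 q.2) ((Ici (t 0)) ×ˢ (univ : Set ℝ)))
    (hf_sign : ∀ s ∈ Ici (t 0), ∀ y : ℝ, y ≠ 0 → 0 < y * f s y)
    (x x' : ℝ → ℝ)
    (hx_deriv : ∀ s ∈ Ici (t 0), HasDerivAt x (x' s) s)
    (hx'_cont : ContinuousOn x' (Ici (t 0)))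
    (hE : ∀ k : ℕ, ∀ s ∈ Ioo (t k) (t (k+1)),
      HasDerivAt (fun u => r u * x' u) (-(f s (x (ζ k)))) s)
    (p : ℝ → ℝ) (hp_cont : ContinuousOn p (Ici (t 0)))
    (hp_nonneg : ∀ s ∈ Ici (t 0), 0 ≤ p s)
    (φ : ℝ → ℝ) (hφ_smooth : ContDiff ℝ 1 φ) (hφ_mono : Monotone φ)
    (hφ_sign : ∀ y : ℝ, y ≠ 0 → 0 < y * φ y)
    (hfp_pos : ∀ s ∈ Ici (t 0), ∀ y : ℝ, 0 < y → p s * φ y ≤ f s y)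
    (hfp_neg : ∀ s ∈ Ici (t 0), ∀ y : ℝ, y < 0 → f s y ≤ p s * φ y)
    (hp_int : ∫⁻ u in Ioi (t 0), ENNReal.ofReal (p u) < ⊤)
    (ε : ℝ) (hε : 0 < ε)
    (hφ_int : ∫⁻ u in Ioi ε, ENNReal.ofReal (1 / φ u) < ⊤)
    (hx_pos : ∀ s ∈ Ici (t 0), 0 < x s)
    (hx'_nonneg : ∀ s ∈ Ici (t 0), 0 ≤ x' s) :
    Summable (fun j : ℕ => ∫ s in t j..ζ j, (1 / r s) * ∫ u in Ioi (t (j+1)), p u) ∧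
    IntegrableOn (fun z => 1 / φ z) (Ioi (x (t 0))) ∧
    ∑' j : ℕ, (∫ s in t j..ζ j, (1 / r s) * ∫ u in Ioi (t (j+1)), p u) ≤
      ∫ z in Ioi (x (t 0)), 1 / φ z := by
  have htk : ∀ k, t 0 ≤ t k := fun k => ht_mono.monotone (Nat.zero_le k)
  have hζ1 : ∀ k, t k ≤ ζ k := fun k => (hζ k).1
  have hζ2 : ∀ k, ζ k ≤ t (k+1) := fun k => (hζ k).2
  have hζτ : ∀ k, t 0 ≤ ζ k := fun k => le_trans (htk k) (hζ1 k)
  have htt : ∀ k, t k ≤ t (k+1) := fun k => (ht_mono (Nat.lt_succ_self k)).le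
  -- continuity and monotonicity of x
  have hx_cont : ContinuousOn x (Ici (t 0)) :=
    fun s hs => ((hx_deriv s hs).continuousAt).continuousWithinAt
  have hx_mono : MonotoneOn x (Ici (t 0)) := by
    apply monotoneOn_of_deriv_nonneg (convex_Ici (t 0)) hx_cont
    · intro s hs
      rw [interior_Ici] at hs
      exact (hx_deriv s (mem_Ici.2 (le_of_lt hs))).differentiableAt.differentiableWithinAt
    · intro s hs
      rw [interior_Ici] at hs
      rw [(hx_deriv s (mem_Ici.2 (le_of_lt hs))).deriv]
      exact hx'_nonneg s (mem_Ici.2 (le_of_lt hs))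
  -- positivity of φ ∘ x
  have hφxpos : ∀ s ∈ Ici (t 0), 0 < φ (x s) := by
    intro s hs
    have h := hφ_sign (x s) (ne_of_gt (hx_pos s hs))
    nlinarith [hx_pos s hs]
  have hfpos : ∀ s ∈ Ici (t 0), ∀ y : ℝ, 0 < y → 0 < f s y := by
    intro s hs y hy
    have h := hf_sign s hs y (ne_of_gt hy)
    nlinarith
  -- g := r * x'
  set g : ℝ → ℝ := fun u => r u * x' u with hgdef
  have hg_cont : ContinuousOn g (Ici (t 0)) := hr_cont.mul hx'_cont
  have hg_nonneg : ∀ s ∈ Ici (t 0), 0 ≤ g s :=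
    fun s hs => mul_nonneg (hr_pos s hs).le (hx'_nonneg s hs)
  have hIccsub : ∀ k, Icc (t k) (t (k+1)) ⊆ Ici (t 0) := fun k s hs => le_trans (htk k) hs.1
  have hg_anti_k : ∀ k, AntitoneOn g (Icc (t k) (t (k+1))) := by
    intro k
    apply antitoneOn_of_deriv_nonpos (convex_Icc _ _) (hg_cont.mono (hIccsub k))
    · intro s hs
      rw [interior_Icc] at hs
      exact (hE k s hs).differentiableAt.differentiableWithinAt
    · intro s hs
      rw [interior_Icc] at hs
      rw [(hE k s hs).deriv]
      have hx0 : 0 < x (ζ k) := hx_pos (ζ k) (hζτ k)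
      have := hfpos s (le_trans (htk k) hs.1.le) (x (ζ k)) hx0
      linarith
  have hg_anti_n : ∀ n, AntitoneOn g (Icc (t 0) (t n)) := by
    intro n
    induction n with
    | zero =>
      intro a ha b hb hab
      have : a = b := le_antisymm hab (hb.2.trans ha.1)
      rw [this]
    | succ n ih =>
      intro a ha b hb hab
      rcases le_total b (t n) with hbn | hbn
      · exact ih ⟨ha.1, hab.trans hbn⟩ ⟨hb.1, hbn⟩ hab
      · rcases le_total a (t n) with han | han
        · have h1 := ih ⟨ha.1, han⟩ ⟨htk n, le_refl _⟩ han
          have h2 := hg_anti_k n ⟨le_refl _, htt n⟩ ⟨hbn, hb.2⟩ hbn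
          exact h2.trans h1
        · exact hg_anti_k n ⟨han, hab.trans hb.2⟩ ⟨hbn, hb.2⟩ hab
  have hg_anti : ∀ a, t 0 ≤ a → ∀ b, a ≤ b → g b ≤ g a := by
    intro a ha b hab
    obtain ⟨n, hn⟩ := (ht_top.eventually_ge_atTop b).exists
    exact hg_anti_n n ⟨ha, hab.trans hn⟩ ⟨ha.trans hab, hn⟩ hab
  -- continuity of f(·, x (ζ k))
  have hf_cont_k : ∀ k, ContinuousOn (fun u => f u (x (ζ k))) (Ici (t 0)) := by
    intro k
    have hc : ContinuousOn (fun u : ℝ => ((u, x (ζ k)) : ℝ × ℝ)) (Ici (t 0)) :=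
      continuousOn_id.prodMk continuousOn_const
    exact hf_cont.comp hc (fun u hu => ⟨hu, mem_univ _⟩)
  -- FTC on each subinterval
  have hFTC : ∀ k, ∫ u in (t k)..(t (k+1)), f u (x (ζ k)) = g (t k) - g (t (k+1)) := by
    intro k
    have hint : IntervalIntegrable (fun u => -(f u (x (ζ k)))) volume (t k) (t (k+1)) := by
      apply ContinuousOn.intervalIntegrable
      rw [uIcc_of_le (htt k)]
      exact ((hf_cont_k k).mono (hIccsub k)).neg
    have h := intervalIntegral.integral_eq_sub_of_hasDeriv_right_of_le (htt k)
      (hg_cont.mono (hIccsub k))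
      (fun s hs => ((hE k s hs).hasDerivWithinAt)) hint
    have h2 : ∫ u in (t k)..(t (k+1)), -(f u (x (ζ k))) = -∫ u in (t k)..(t (k+1)), f u (x (ζ k)) :=
      intervalIntegral.integral_neg
    rw [h2] at h
    linarith
  -- per-interval lower bound
  have hstep : ∀ j, ∀ s ∈ Icc (t j) (ζ j), ∀ k, j + 1 ≤ k →
      φ (x s) * ∫ u in (t k)..(t (k+1)), p u ≤ g (t k) - g (t (k+1)) := by
    intro j s hs k hk
    have hsτ : t 0 ≤ s := le_trans (htk j) hs.1
    have hsk : s ≤ ζ k := hs.2.trans ((hζ2 j).trans (le_trans (ht_mono.monotone hk) (hζ1 k)))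
    have hxsk : x s ≤ x (ζ k) := hx_mono hsτ (hζτ k) hsk
    rw [← hFTC k, ← intervalIntegral.integral_const_mul]
    apply intervalIntegral.integral_mono_on (htt k)
    · apply ContinuousOn.intervalIntegrable
      rw [uIcc_of_le (htt k)]
      exact continuousOn_const.mul (hp_cont.mono (hIccsub k))
    · apply ContinuousOn.intervalIntegrable
      rw [uIcc_of_le (htt k)]
      exact (hf_cont_k k).mono (hIccsub k)
    · intro u hu
      have huτ : t 0 ≤ u := (htk k).trans hu.1
      have h1 : φ (x s) * p u ≤ φ (x (ζ k)) * p u :=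
        mul_le_mul_of_nonneg_right (hφ_mono hxsk) (hp_nonneg u huτ)
      have h2 : p u * φ (x (ζ k)) ≤ f u (x (ζ k)) :=
        hfp_pos u huτ (x (ζ k)) (hx_pos (ζ k) (hζτ k))
      nlinarith
  -- integrability of p
  have hp_int_m : ∀ m : ℕ, IntegrableOn p (Ioi (t m)) := by
    intro m
    have hsub : Ioi (t m) ⊆ Ici (t 0) := fun u hu => (htk m).trans hu.le
    refine ⟨(hp_cont.mono hsub).aestronglyMeasurable measurableSet_Ioi, ?_⟩
    rw [hasFiniteIntegral_iff_ofReal]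
    · calc ∫⁻ u in Ioi (t m), ENNReal.ofReal (p u) ≤ ∫⁻ u in Ioi (t 0), ENNReal.ofReal (p u) :=
        lintegral_mono_set (Ioi_subset_Ioi (htk m))
      _ < ⊤ := hp_int
    · exact (ae_restrict_iff' measurableSet_Ioi).2
        (Eventually.of_forall (fun u hu => hp_nonneg u (hsub hu)))
  have hP_nonneg : ∀ m : ℕ, 0 ≤ ∫ u in Ioi (t m), p u :=
    fun m => setIntegral_nonneg measurableSet_Ioi (fun u hu => hp_nonneg u ((htk m).trans hu.le))
  -- the tendsto along partition points
  have hPj : ∀ j : ℕ, Tendsto (fun N : ℕ => ∫ u in (t (j+1))..(t (j+1+N)), p u) atTop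
      (nhds (∫ u in Ioi (t (j+1)), p u)) := by
    intro j
    apply MeasureTheory.intervalIntegral_tendsto_integral_Ioi (t (j+1)) (hp_int_m (j+1))
    apply ht_top.comp
    exact tendsto_atTop_atTop_of_monotone (fun a b hab => by omega)
      (fun b => ⟨b, by omega⟩)
  -- key bound on finite pieces
  have hT : ∀ j, ∀ s ∈ Icc (t j) (ζ j), ∀ N : ℕ,
      φ (x s) * ∫ u in (t (j+1))..(t (j+1+N)), p u ≤ g s := by
    intro j s hs N
    have hsτ : t 0 ≤ s := le_trans (htk j) hs.1
    have hii : ∀ i : ℕ, i < N → IntervalIntegrable p volume (t (j+1+i)) (t (j+1+i+1)) := by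
      intro i _
      apply ContinuousOn.intervalIntegrable
      rw [uIcc_of_le (htt (j+1+i))]
      exact hp_cont.mono (hIccsub (j+1+i))
    have hsum : ∫ u in (t (j+1))..(t (j+1+N)), p u
        = ∑ i ∈ Finset.range N, ∫ u in (t (j+1+i))..(t (j+1+i+1)), p u :=
      (intervalIntegral.sum_integral_adjacent_intervals (a := fun i => t (j+1+i)) hii).symm
    rw [hsum, Finset.mul_sum]
    calc ∑ i ∈ Finset.range N, φ (x s) * ∫ u in (t (j+1+i))..(t (j+1+i+1)), p u
        ≤ ∑ i ∈ Finset.range N, (g (t (j+1+i)) - g (t (j+1+i+1))) :=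
          Finset.sum_le_sum (fun i _ => hstep j s hs (j+1+i) (by omega))
      _ = g (t (j+1)) - g (t (j+1+N)) := by
          have := Finset.sum_range_sub' (fun i => g (t (j+1+i))) N
          simpa [add_assoc] using this
      _ ≤ g (t (j+1)) := by
          have := hg_nonneg (t (j+1+N)) (htk (j+1+N))
          linarith
      _ ≤ g s := hg_anti s hsτ (t (j+1)) (hs.2.trans (hζ2 j))
  -- pass to the limit
  have hF : ∀ j, ∀ s ∈ Icc (t j) (ζ j),
      φ (x s) * (∫ u in Ioi (t (j+1)), p u) ≤ g s := by
    intro j s hs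
    exact le_of_tendsto (tendsto_const_nhds.mul (hPj j)) (Eventually.of_forall (hT j s hs))
  -- divide
  have hdiv : ∀ j, ∀ s ∈ Icc (t j) (ζ j),
      (1 / r s) * (∫ u in Ioi (t (j+1)), p u) ≤ x' s / φ (x s) := by
    intro j s hs
    have hsτ : t 0 ≤ s := le_trans (htk j) hs.1
    have hrs := hr_pos s hsτ
    have hφs := hφxpos s hsτ
    have hF' := hF j s hs
    rw [one_div, inv_mul_eq_div, div_le_div_iff₀ hrs hφs]
    simp only [hgdef] at hF'
    nlinarith [hF']
  -- integrate over [t j, ζ j] and substitute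
  have hφ_cont : Continuous φ := hφ_smooth.continuous
  have hGH : ∀ j, (∫ s in (t j)..(ζ j), (1 / r s) * (∫ u in Ioi (t (j+1)), p u))
      ≤ ∫ z in (x (t j))..(x (ζ j)), 1 / φ z := by
    intro j
    have hle := hζ1 j
    have hsub : Icc (t j) (ζ j) ⊆ Ici (t 0) := fun s hs => (htk j).trans hs.1
    have c1 : ContinuousOn (fun s => (1 / r s) * (∫ u in Ioi (t (j+1)), p u)) (Icc (t j) (ζ j)) :=
      (continuousOn_const.div (hr_cont.mono hsub)
        (fun s hs => (hr_pos s (hsub hs)).ne')).mul continuousOn_const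
    have c2 : ContinuousOn (fun s => x' s / φ (x s)) (Icc (t j) (ζ j)) :=
      (hx'_cont.mono hsub).div (hφ_cont.comp_continuousOn (hx_cont.mono hsub))
        (fun s hs => (hφxpos s (hsub hs)).ne')
    have i1 : IntervalIntegrable (fun s => (1 / r s) * (∫ u in Ioi (t (j+1)), p u))
        volume (t j) (ζ j) := by
      apply ContinuousOn.intervalIntegrable; rwa [uIcc_of_le hle]
    have i2 : IntervalIntegrable (fun s => x' s / φ (x s)) volume (t j) (ζ j) := by
      apply ContinuousOn.intervalIntegrable; rwa [uIcc_of_le hle]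
    have h1 : (∫ s in (t j)..(ζ j), (1 / r s) * (∫ u in Ioi (t (j+1)), p u))
        ≤ ∫ s in (t j)..(ζ j), x' s / φ (x s) :=
      intervalIntegral.integral_mono_on hle i1 i2 (hdiv j)
    have h2 : ∫ s in (t j)..(ζ j), x' s / φ (x s) = ∫ z in (x (t j))..(x (ζ j)), 1 / φ z := by
      have hsub' : uIcc (t j) (ζ j) ⊆ Ici (t 0) := by rw [uIcc_of_le hle]; exact hsub
      have himg : ∀ y ∈ x '' (uIcc (t j) (ζ j)), φ y ≠ 0 := by
        rintro y ⟨s, hs, rfl⟩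
        exact (hφxpos s (hsub' hs)).ne'
      have hsubst := intervalIntegral.integral_comp_smul_deriv''
        (f := x) (f' := x') (g := fun z => 1 / φ z)
        (hx_cont.mono hsub')
        (fun s hs => by
          rw [min_eq_left hle, max_eq_right hle] at hs
          exact (hx_deriv s (mem_Ici.2 ((htk j).trans hs.1.le))).hasDerivWithinAt)
        (hx'_cont.mono hsub')
        (fun y hy => (continuousAt_const.div hφ_cont.continuousAt (himg y hy)).continuousWithinAt)
      simp only [smul_eq_mul, Function.comp] at hsubst
      rw [← hsubst]
      congr 1
      ext s
      rw [mul_one_div]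
    rw [h2] at h1
    exact h1
  -- positivity of φ on positive reals
  have hφpos : ∀ y : ℝ, 0 < y → 0 < φ y := by
    intro y hy
    have h := hφ_sign y (ne_of_gt hy)
    nlinarith
  have hx0pos : 0 < x (t 0) := hx_pos (t 0) Set.self_mem_Ici
  -- Part 2 : integrability of 1/φ on Ioi (x (t 0))
  have hint2 : IntegrableOn (fun z => 1 / φ z) (Ioi (x (t 0))) := by
    have hmeas : AEStronglyMeasurable (fun z => 1 / φ z) (volume.restrict (Ioi (x (t 0)))) := by
      apply ContinuousOn.aestronglyMeasurable _ measurableSet_Ioi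
      intro y hy
      exact (continuousAt_const.div hφ_cont.continuousAt
        (hφpos y (hx0pos.trans hy)).ne').continuousWithinAt
    refine ⟨hmeas, ?_⟩
    rw [hasFiniteIntegral_iff_ofReal ((ae_restrict_iff' measurableSet_Ioi).2
      (Eventually.of_forall (fun z hz =>
        (one_div_pos.2 (hφpos z (hx0pos.trans hz))).le)))]
    have hcover : Ioi (x (t 0)) ⊆ Ioc (x (t 0)) ε ∪ Ioi ε := by
      intro z hz
      rcases le_or_gt z ε with h | h
      · exact Or.inl ⟨hz, h⟩
      · exact Or.inr h
    calc ∫⁻ z in Ioi (x (t 0)), ENNReal.ofReal (1 / φ z)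
        ≤ ∫⁻ z in Ioc (x (t 0)) ε ∪ Ioi ε, ENNReal.ofReal (1 / φ z) :=
          lintegral_mono_set hcover
      _ ≤ (∫⁻ z in Ioc (x (t 0)) ε, ENNReal.ofReal (1 / φ z))
          + ∫⁻ z in Ioi ε, ENNReal.ofReal (1 / φ z) := lintegral_union_le _ _ _
      _ < ⊤ := by
          apply ENNReal.add_lt_top.2
          refine ⟨?_, hφ_int⟩
          calc ∫⁻ z in Ioc (x (t 0)) ε, ENNReal.ofReal (1 / φ z)
              ≤ ∫⁻ _ in Ioc (x (t 0)) ε, ENNReal.ofReal (1 / φ (x (t 0))) := by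
                apply setLIntegral_mono' measurableSet_Ioc
                intro z hz
                apply ENNReal.ofReal_le_ofReal
                apply one_div_le_one_div_of_le (hφpos (x (t 0)) hx0pos)
                exact hφ_mono hz.1.le
            _ < ⊤ := by
                rw [setLIntegral_const]
                exact ENNReal.mul_lt_top ENNReal.ofReal_lt_top (by simp [measure_Ioc_lt_top])
  -- nonnegativity of the terms
  have ha_nonneg : ∀ j : ℕ, 0 ≤ ∫ s in (t j)..(ζ j), (1 / r s) * ∫ u in Ioi (t (j+1)), p u := by
    intro j
    apply intervalIntegral.integral_nonneg (hζ1 j)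
    intro s hs
    have hsτ : t 0 ≤ s := (htk j).trans hs.1
    exact mul_nonneg (one_div_nonneg.2 (hr_pos s (mem_Ici.2 hsτ)).le) (hP_nonneg (j+1))
  -- interval integrability of 1/φ on positive intervals
  have hφ_ii : ∀ a b : ℝ, 0 < a → a ≤ b → IntervalIntegrable (fun z => 1 / φ z) volume a b := by
    intro a b ha hab
    apply ContinuousOn.intervalIntegrable
    rw [uIcc_of_le hab]
    intro z hz
    exact (continuousAt_const.div hφ_cont.continuousAt
      (hφpos z (ha.trans_le hz.1)).ne').continuousWithinAt
  have hxt_pos : ∀ k, 0 < x (t k) := fun k => hx_pos (t k) (htk k)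
  have hxt_mono : ∀ k, x (t k) ≤ x (t (k+1)) := fun k => hx_mono (htk k) (htk (k+1)) (htt k)
  -- partial sum bound
  have hbound : ∀ N : ℕ,
      ∑ j ∈ Finset.range N, (∫ s in (t j)..(ζ j), (1 / r s) * ∫ u in Ioi (t (j+1)), p u)
        ≤ ∫ z in Ioi (x (t 0)), 1 / φ z := by
    intro N
    have hnonnegφ : 0 ≤ᵐ[volume.restrict (Ioi (x (t 0)))] (fun z => 1 / φ z) :=
      (ae_restrict_iff' measurableSet_Ioi).2 (Eventually.of_forall (fun z hz =>
        (one_div_pos.2 (hφpos z (hx0pos.trans hz))).le))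
    calc ∑ j ∈ Finset.range N, (∫ s in (t j)..(ζ j), (1 / r s) * ∫ u in Ioi (t (j+1)), p u)
        ≤ ∑ j ∈ Finset.range N, ∫ z in (x (t j))..(x (ζ j)), 1 / φ z :=
          Finset.sum_le_sum (fun j _ => hGH j)
      _ ≤ ∑ j ∈ Finset.range N, ∫ z in (x (t j))..(x (t (j+1))), 1 / φ z := by
          apply Finset.sum_le_sum
          intro j _
          apply intervalIntegral.integral_mono_interval le_rfl
            (hx_mono (htk j) (hζτ j) (hζ1 j))
            (hx_mono (hζτ j) (htk (j+1)) (hζ2 j))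
          · apply (ae_restrict_iff' measurableSet_Ioc).2
            exact Eventually.of_forall (fun z hz =>
              (one_div_pos.2 (hφpos z ((hxt_pos j).trans hz.1))).le)
          · exact hφ_ii _ _ (hxt_pos j) (hxt_mono j)
      _ = ∫ z in (x (t 0))..(x (t N)), 1 / φ z := by
          apply intervalIntegral.sum_integral_adjacent_intervals
            (a := fun k => x (t k))
          intro k _
          exact hφ_ii _ _ (hxt_pos k) (hxt_mono k)
      _ ≤ ∫ z in Ioi (x (t 0)), 1 / φ z := by
          rw [intervalIntegral.integral_of_le (hx_mono (htk 0) (htk N) (htk N))]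
          apply setIntegral_mono_set hint2 hnonnegφ
          exact (Ioc_subset_Ioi_self).eventuallyLE
  have hsummable : Summable
      (fun j : ℕ => ∫ s in (t j)..(ζ j), (1 / r s) * ∫ u in Ioi (t (j+1)), p u) :=
    summable_of_sum_range_le ha_nonneg hbound
  exact ⟨hsummable, hint2, Summable.tsum_le_of_sum_range_le hsummable hbound⟩
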